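/- Let G be a finite abelian group of order n and x, y ∈ G with e(x) = e(y), where e(x) = max{d : d | exp(G), x ∈ dG}. Then the number of k-subsets of G summing to x equals the number of k-subsets summing to y, and similarly for k-subsets of G \ {0}. -/

import Mathlib

open Finset

/-- The family of `k`-element subsets of `G` whose elements sum to `x`. -/
def sumBlocks (G : Type) [AddCommGroup G] [Fintype G] [DecidableEq G]
    (k : ℕ) (x : G) : Finset (Finset G) :=
  Finset.univ.filter (fun T => T.card = k ∧ T.sum id = x)

/-- The family of `k`-element subsets of `G \ {0}` whose elements sum to `x`. -/
def sumBlocksStar (G : Type) [AddCommGroup G] [Fintype G] [DecidableEq G]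
    (k : ℕ) (x : G) : Finset (Finset G) :=
  Finset.univ.filter (fun T => T.card = k ∧ T.sum id = x ∧ (0 : G) ∉ T)

/-- `(G, B_k^x)` is a 1-design: the block family is nonempty and every
point of `G` lies in the same number of blocks. -/
def isOneDesign (G : Type) [AddCommGroup G] [Fintype G] [DecidableEq G]
    (k : ℕ) (x : G) : Prop :=
  sumBlocks G k x ≠ ∅ ∧ ∃ r : ℕ, ∀ y : G,
    ((sumBlocks G k x).filter (fun B => y ∈ B)).card = r

/-- `e(x) = max {d : d ∣ exp(G), x ∈ dG}`. -/
noncomputable def eMax (G : Type) [AddCommGroup G] [Fintype G] [DecidableEq G] (x : G) : ℕ :=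
  Nat.findGreatest (fun d => d ∣ AddMonoid.exponent G ∧ ∃ y : G, d • y = x)
    (AddMonoid.exponent G)

open scoped Classical

set_option linter.unusedSectionVars false
set_option linter.unusedVariables false

section Aux

variable {G : Type} [AddCommGroup G] [Fintype G] [DecidableEq G]

/-- If `x` is divisible by `a` and by `b`, it is divisible by `lcm a b`. -/
lemma exists_lcm_smul {a b : ℕ} {x : G} (ha : 0 < a) (hb : 0 < b)
    (hxa : ∃ u : G, a • u = x) (hxb : ∃ v : G, b • v = x) :
    ∃ w : G, Nat.lcm a b • w = x := by
  obtain ⟨u, hu⟩ := hxa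
  obtain ⟨v, hv⟩ := hxb
  have hg : 0 < Nat.gcd a b := Nat.gcd_pos_of_pos_left b ha
  set g := Nat.gcd a b with hgdef
  set a' := a / g with ha'def
  set b' := b / g with hb'def
  have haa : g * a' = a := Nat.mul_div_cancel' (Nat.gcd_dvd_left a b)
  have hbb : g * b' = b := Nat.mul_div_cancel' (Nat.gcd_dvd_right a b)
  have hl1 : a' * b = Nat.lcm a b := by
    have h1 : g * (a' * b) = g * Nat.lcm a b := by
      rw [← mul_assoc, haa, Nat.gcd_mul_lcm]
    exact Nat.eq_of_mul_eq_mul_left hg h1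
  have hl2 : b' * a = Nat.lcm a b := by
    have h1 : g * (b' * a) = g * Nat.lcm a b := by
      rw [← mul_assoc, hbb, mul_comm b a, Nat.gcd_mul_lcm]
    exact Nat.eq_of_mul_eq_mul_left hg h1
  set s := Nat.gcdA a b with hsdef
  set t := Nat.gcdB a b with htdef
  have hbez : (g : ℤ) = a * s + b * t := Nat.gcd_eq_gcd_ab a b
  have haaZ : (g : ℤ) * a' = a := by exact_mod_cast haa
  have hbbZ : (g : ℤ) * b' = b := by exact_mod_cast hbb
  have expand : (g : ℤ) * ((a' : ℤ) * s + (b' : ℤ) * t) = g := by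
    rw [mul_add, ← mul_assoc, ← mul_assoc, haaZ, hbbZ]
    exact hbez.symm
  have h1 : (a' : ℤ) * s + (b' : ℤ) * t = 1 :=
    mul_left_cancel₀ (by exact_mod_cast hg.ne' : (g : ℤ) ≠ 0)
      (expand.trans (mul_one (g : ℤ)).symm)
  refine ⟨s • v + t • u, ?_⟩
  have hv' : (Nat.lcm a b : ℤ) • v = (a' : ℤ) • x := by
    rw [natCast_zsmul, natCast_zsmul, ← hl1, mul_smul, hv]
  have hu' : (Nat.lcm a b : ℤ) • u = (b' : ℤ) • x := by
    rw [natCast_zsmul, natCast_zsmul, ← hl2, mul_smul, hu]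
  have key : (Nat.lcm a b : ℤ) • (s • v + t • u) = x := by
    rw [smul_add, smul_comm ((Nat.lcm a b : ℤ)) s v, smul_comm ((Nat.lcm a b : ℤ)) t u,
      hv', hu', smul_smul, smul_smul, ← add_smul,
      show s * (a' : ℤ) + t * b' = (a' : ℤ) * s + (b' : ℤ) * t by ring, h1, one_smul]
  rw [← natCast_zsmul, key]

lemma exponent_pos' : 0 < AddMonoid.exponent G :=
  AddMonoid.ExponentExists.exponent_pos (AddMonoid.ExponentExists.of_finite)

lemma eMax_spec (x : G) :
    eMax G x ∣ AddMonoid.exponent G ∧ ∃ y : G, eMax G x • y = x := by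
  have hexp : 0 < AddMonoid.exponent G := exponent_pos'
  have := Nat.findGreatest_spec
    (P := fun d => d ∣ AddMonoid.exponent G ∧ ∃ y : G, d • y = x) (m := 1)
    hexp ⟨one_dvd _, ⟨x, one_smul ℕ x⟩⟩
  simpa [eMax] using this

lemma eMax_pos (x : G) : 0 < eMax G x := by
  have hexp : 0 < AddMonoid.exponent G := exponent_pos'
  have := Nat.le_findGreatest
    (P := fun d => d ∣ AddMonoid.exponent G ∧ ∃ y : G, d • y = x) (m := 1)
    hexp ⟨one_dvd _, ⟨x, one_smul ℕ x⟩⟩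
  have h2 : 1 ≤ eMax G x := by unfold eMax; exact this
  exact h2

lemma dvd_eMax_iff {m : ℕ} (hm : m ∣ AddMonoid.exponent G) (x : G) :
    m ∣ eMax G x ↔ ∃ g : G, m • g = x := by
  have hexp : 0 < AddMonoid.exponent G := exponent_pos'
  have hmpos : 0 < m := Nat.pos_of_dvd_of_pos hm hexp
  obtain ⟨hed, y0, hy0⟩ := eMax_spec x
  have hepos : 0 < eMax G x := eMax_pos x
  constructor
  · rintro ⟨c, hc⟩
    exact ⟨c • y0, by rw [smul_smul, ← hc, hy0]⟩
  · intro hx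
    obtain ⟨w, hw⟩ := exists_lcm_smul hmpos hepos hx ⟨y0, hy0⟩
    have hlcm_dvd : Nat.lcm m (eMax G x) ∣ AddMonoid.exponent G := Nat.lcm_dvd hm hed
    have hle : Nat.lcm m (eMax G x) ≤ eMax G x := by
      have := Nat.le_findGreatest
        (P := fun d => d ∣ AddMonoid.exponent G ∧ ∃ y : G, d • y = x)
        (Nat.le_of_dvd hexp hlcm_dvd) ⟨hlcm_dvd, ⟨w, hw⟩⟩
      simpa [eMax] using this
    have hlcmpos : 0 < Nat.lcm m (eMax G x) := Nat.pos_of_dvd_of_pos hlcm_dvd hexp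
    have heq : Nat.lcm m (eMax G x) = eMax G x :=
      le_antisymm hle (Nat.le_of_dvd hlcmpos (Nat.dvd_lcm_right _ _))
    exact heq ▸ Nat.dvd_lcm_left m _



lemma char_nsmul_exponent (ψ : AddChar G ℂ) : AddMonoid.exponent G • ψ = 0 := by
  apply DFunLike.ext
  intro a
  show ψ a ^ AddMonoid.exponent G = 1
  rw [← AddChar.map_nsmul_eq_pow, AddMonoid.exponent_nsmul_eq_zero, AddChar.map_zero_eq_one]

lemma char_order_dvd_exponent (ψ : AddChar G ℂ) :
    addOrderOf ψ ∣ AddMonoid.exponent G :=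
  addOrderOf_dvd_of_nsmul_eq_zero (char_nsmul_exponent ψ)

lemma char_pow_order (ψ : AddChar G ℂ) (a : G) : ψ a ^ addOrderOf ψ = 1 := by
  have h := addOrderOf_nsmul_eq_zero ψ
  have := DFunLike.congr_fun h a
  rw [AddChar.nsmul_apply] at this
  exact this

lemma char_order_pos (ψ : AddChar G ℂ) : 0 < addOrderOf ψ := addOrderOf_pos ψ

/-- The image of a character is exactly the set of `m`-th roots of unity,
where `m` is the order of the character. -/
lemma image_char (ψ : AddChar G ℂ) :
    Finset.univ.image ψ = Polynomial.nthRootsFinset (addOrderOf ψ) (1 : ℂ) := by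
  set m := addOrderOf ψ with hm
  have hmpos : 0 < m := char_order_pos ψ
  -- the unit-valued homomorphism
  set φ : Multiplicative G →* ℂˣ := ψ.toMonoidHom.toHomUnits with hφ
  have hφcoe : ∀ a : Multiplicative G, (φ a : ℂ) = ψ a.toAdd := by
    intro a; rw [hφ, MonoidHom.coe_toHomUnits, AddChar.toMonoidHom_apply]
  set H : Subgroup ℂˣ := φ.range with hH
  have hcards : Nat.card H = m := by
    have hcyc : IsCyclic H := inferInstance
    have hexpH : Monoid.exponent H = Nat.card H := IsCyclic.exponent_eq_card
    have h1 : m ∣ Nat.card H := by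
      apply addOrderOf_dvd_of_nsmul_eq_zero
      apply DFunLike.ext
      intro a
      show ψ a ^ Nat.card H = 1
      set K := Nat.card H with hK
      have h0 : (⟨φ a, ⟨a, rfl⟩⟩ : H) ^ K = 1 := hK ▸ pow_card_eq_one'
      have h2 : (φ a) ^ K = 1 := by
        have := congrArg Subtype.val h0
        simpa using this
      have h3 := congrArg Units.val h2
      simp [hφcoe a] at h3
      exact h3
    have h2 : Nat.card H ∣ m := by
      rw [← hexpH]
      apply Monoid.exponent_dvd_of_forall_pow_eq_one
      rintro ⟨u, a, rfl⟩
      apply Subtype.ext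
      show (φ a) ^ m = 1
      apply Units.ext
      push_cast
      rw [hφcoe a]
      exact char_pow_order ψ a.toAdd
    exact Nat.dvd_antisymm h2 h1
  have hsub : Finset.univ.image ψ ⊆ Polynomial.nthRootsFinset m (1 : ℂ) := by
    intro z hz
    obtain ⟨a, -, rfl⟩ := Finset.mem_image.mp hz
    exact (Polynomial.mem_nthRootsFinset hmpos (1 : ℂ)).mpr (char_pow_order ψ a)
  have hcard1 : (Finset.univ.image ψ).card = m := by
    have himeq : Finset.univ.image ψ = (Finset.univ.image φ).image (Units.val) := by
      ext z
      simp only [Finset.mem_image]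
      constructor
      · rintro ⟨a, -, rfl⟩
        exact ⟨φ (Multiplicative.ofAdd a), ⟨⟨Multiplicative.ofAdd a, Finset.mem_univ _, rfl⟩,
          by rw [hφcoe]; rfl⟩⟩
      · rintro ⟨u, ⟨a, -, rfl⟩, rfl⟩
        exact ⟨a.toAdd, Finset.mem_univ _, (hφcoe a).symm⟩
    have h2 : ((Finset.univ.image φ).image (Units.val)).card = (Finset.univ.image φ).card :=
      Finset.card_image_of_injective _ Units.val_injective
    have h3 : (Finset.univ.image φ).card = Nat.card H := by
      have hr : (Set.range ⇑φ) = (↑(Finset.univ.image φ) : Set ℂˣ) := by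
        rw [Finset.coe_image, Finset.coe_univ, Set.image_univ]
      have : Nat.card H = Nat.card (Set.range ⇑φ) := rfl
      rw [this, hr, Nat.card_coe_set_eq, Set.ncard_coe_finset]
    rw [himeq, h2, h3, hcards]
  have hcard2 : (Polynomial.nthRootsFinset m (1 : ℂ)).card = m :=
    (Complex.isPrimitiveRoot_exp m hmpos.ne').card_nthRootsFinset
  exact Finset.eq_of_subset_of_card_le hsub (by rw [hcard1, hcard2])

lemma card_fiber_eq (ψ : AddChar G ℂ) {z : ℂ} (hz : z ∈ Finset.univ.image ψ) :
    (Finset.univ.filter fun a => ψ a = z).card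
      = (Finset.univ.filter fun a => ψ a = 1).card := by
  obtain ⟨g0, -, hg0⟩ := Finset.mem_image.mp hz
  apply Finset.card_bij' (fun a _ => a - g0) (fun a _ => a + g0)
  · intro a ha
    simp only [Finset.mem_filter, Finset.mem_univ, true_and] at ha ⊢
    have hz0 : ψ g0 ≠ 0 := (ψ.val_isUnit g0).ne_zero
    rw [AddChar.map_sub_eq_div, ha, ← hg0, div_self hz0]
  · intro a ha
    simp only [Finset.mem_filter, Finset.mem_univ, true_and] at ha ⊢
    rw [AddChar.map_add_eq_mul, ha, one_mul, hg0]
  · intro a ha; exact sub_add_cancel a g0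
  · intro a ha; exact add_sub_cancel_right a g0


lemma card_image_char (ψ : AddChar G ℂ) :
    (Finset.univ.image ψ).card = addOrderOf ψ := by
  rw [image_char]
  exact (Complex.isPrimitiveRoot_exp _ (char_order_pos ψ).ne').card_nthRootsFinset

lemma card_fiber_one_mul (ψ : AddChar G ℂ) :
    addOrderOf ψ * (Finset.univ.filter fun a => ψ a = 1).card = Fintype.card G := by
  have h := Finset.card_eq_sum_card_fiberwise
    (f := ψ) (s := Finset.univ) (t := Finset.univ.image ψ)
    (fun a _ => Finset.mem_image_of_mem _ (Finset.mem_univ a))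
  rw [Finset.card_univ] at h
  rw [h, Finset.sum_congr rfl (fun z hz => card_fiber_eq ψ hz), Finset.sum_const,
    smul_eq_mul, card_image_char]

lemma count_map_char (f : G → ℂ) (z : ℂ) :
    Multiset.count z (Multiset.map f Finset.univ.val)
      = (Finset.univ.filter (fun a => f a = z)).card := by
  rw [Multiset.count_map]
  have : Multiset.filter (fun a => z = f a) Finset.univ.val
      = (Finset.univ.filter (fun a => z = f a)).val := by
    rw [Finset.filter_val]
  rw [this]
  show (Finset.univ.filter (fun a => z = f a)).card = _
  congr 1
  exact Finset.filter_congr (fun a _ => by rw [eq_comm])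

lemma map_univ_char_eq {ψ χ : AddChar G ℂ} (h : addOrderOf ψ = addOrderOf χ) :
    Multiset.map ψ Finset.univ.val = Multiset.map χ Finset.univ.val := by
  have himg : Finset.univ.image ψ = Finset.univ.image χ := by
    rw [image_char, image_char, h]
  have hc : (Finset.univ.filter fun a => ψ a = 1).card
      = (Finset.univ.filter fun a => χ a = 1).card := by
    have h1 := card_fiber_one_mul ψ
    have h2 := card_fiber_one_mul χ
    rw [h] at h1
    exact Nat.eq_of_mul_eq_mul_left (h ▸ char_order_pos ψ) (h1.trans h2.symm)
  refine Multiset.ext.mpr (fun z => ?_)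
  rw [count_map_char, count_map_char]
  by_cases hz : z ∈ Finset.univ.image ψ
  · have hz' : z ∈ Finset.univ.image χ := himg ▸ hz
    rw [card_fiber_eq ψ hz, card_fiber_eq χ hz', hc]
  · have hz' : z ∉ Finset.univ.image χ := himg ▸ hz
    have e1 : (Finset.univ.filter (fun a => ψ a = z)) = ∅ :=
      Finset.filter_eq_empty_iff.mpr
        (fun {a} _ hfa => hz (Finset.mem_image.mpr ⟨a, Finset.mem_univ a, hfa⟩))
    have e2 : (Finset.univ.filter (fun a => χ a = z)) = ∅ :=
      Finset.filter_eq_empty_iff.mpr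
        (fun {a} _ hfa => hz' (Finset.mem_image.mpr ⟨a, Finset.mem_univ a, hfa⟩))
    rw [e1, e2]


/-- multiplication by `m` as an `AddMonoidHom`. -/
def nsmulHom (m : ℕ) : G →+ G where
  toFun := fun g => m • g
  map_zero' := smul_zero m
  map_add' := fun a b => smul_add m a b

lemma S_card_part {m : ℕ} {x : G} (hx : ∃ g : G, m • g = x) :
    ∑ ψ ∈ Finset.univ.filter (fun ψ : AddChar G ℂ => m • ψ = 0), ψ (-x)
      = ((Finset.univ.filter (fun ψ : AddChar G ℂ => m • ψ = 0)).card : ℂ) := by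
  obtain ⟨g, rfl⟩ := hx
  rw [Finset.sum_congr rfl (fun ψ hψ => ?_), Finset.sum_const, nsmul_eq_mul, mul_one]
  have hψ0 : m • ψ = 0 := (Finset.mem_filter.mp hψ).2
  rw [← smul_neg, AddChar.map_nsmul_eq_pow]
  have := DFunLike.congr_fun hψ0 (-g)
  simpa using this

lemma S_zero_part {m : ℕ} {x : G} (hx : ¬ ∃ g : G, m • g = x) :
    ∑ ψ ∈ Finset.univ.filter (fun ψ : AddChar G ℂ => m • ψ = 0), ψ (-x) = 0 := by
  set R := (nsmulHom (G := G) m).range with hR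
  haveI : Finite (G ⧸ R) := Quotient.finite _
  have hxR : ((-x : G) : G ⧸ R) ≠ 0 := by
    rw [Ne, QuotientAddGroup.eq_zero_iff]
    rintro ⟨g, hg⟩
    exact hx ⟨-g, by simpa [nsmulHom, smul_neg] using congrArg Neg.neg hg⟩
  obtain ⟨χ, hχ⟩ := AddChar.exists_apply_ne_zero.mpr hxR
  set ψ0 : AddChar G ℂ := χ.compAddMonoidHom (QuotientAddGroup.mk' R) with hψ0def
  have hψ0mem : m • ψ0 = 0 := by
    apply DFunLike.ext
    intro a
    show ψ0 a ^ m = 1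
    have h1 : ψ0 a = χ ((a : G ⧸ R)) := rfl
    rw [h1, ← AddChar.map_nsmul_eq_pow]
    have h2 : (m • (a : G ⧸ R)) = ((m • a : G) : G ⧸ R) := by
      rw [← QuotientAddGroup.mk'_apply, ← AddMonoidHom.map_nsmul, QuotientAddGroup.mk'_apply]
    rw [h2]
    have h3 : ((m • a : G) : G ⧸ R) = 0 := by
      rw [QuotientAddGroup.eq_zero_iff]
      exact ⟨a, rfl⟩
    rw [h3, AddChar.map_zero_eq_one]
  have hψ0x : ψ0 (-x) ≠ 1 := hχ
  set Hm := Finset.univ.filter (fun ψ : AddChar G ℂ => m • ψ = 0) with hHm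
  set S := ∑ ψ ∈ Hm, ψ (-x) with hS
  have h2 : ∑ ψ ∈ Hm, (ψ0 + ψ) (-x) = S := by
    refine Finset.sum_bij' (fun ψ _ => ψ0 + ψ) (fun ψ _ => -ψ0 + ψ) ?_ ?_ ?_ ?_ ?_
    · intro ψ hψ
      simp only [hHm, Finset.mem_filter, Finset.mem_univ, true_and] at hψ ⊢
      simp [nsmul_add, hψ, hψ0mem]
    · intro ψ hψ
      simp only [hHm, Finset.mem_filter, Finset.mem_univ, true_and] at hψ ⊢
      simp [nsmul_add, nsmul_neg, hψ, hψ0mem]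
    · intro ψ _; show -ψ0 + (ψ0 + ψ) = ψ; rw [neg_add_cancel_left]
    · intro ψ _; show ψ0 + (-ψ0 + ψ) = ψ; rw [add_neg_cancel_left]
    · intro ψ _; rfl
  have h1 : ∑ ψ ∈ Hm, (ψ0 + ψ) (-x) = ψ0 (-x) * S := by
    rw [hS, Finset.mul_sum]
    exact Finset.sum_congr rfl (fun ψ _ => AddChar.add_apply _ _ _)
  have h3 : (ψ0 (-x) - 1) * S = 0 := by
    rw [sub_mul, one_mul, ← h1, h2, sub_self]
  rcases mul_eq_zero.mp h3 with h | h
  · exact absurd (sub_eq_zero.mp h) hψ0x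
  · exact h


/-- The partial character sum over characters of order exactly `d`. -/
noncomputable def Tsum (d : ℕ) (x : G) : ℂ :=
  ∑ ψ ∈ Finset.univ.filter (fun ψ : AddChar G ℂ => addOrderOf ψ = d), ψ (-x)

lemma filter_nsmul_eq_filter_dvd (m : ℕ) :
    Finset.univ.filter (fun ψ : AddChar G ℂ => m • ψ = 0)
      = Finset.univ.filter (fun ψ : AddChar G ℂ => addOrderOf ψ ∣ m) :=
  Finset.filter_congr (fun ψ _ => (addOrderOf_dvd_iff_nsmul_eq_zero).symm)

lemma Ssum_eq_sum_T {m : ℕ} (hm : m ≠ 0) (x : G) :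
    ∑ ψ ∈ Finset.univ.filter (fun ψ : AddChar G ℂ => addOrderOf ψ ∣ m), ψ (-x)
      = ∑ d ∈ m.divisors, Tsum d x := by
  rw [← Finset.sum_fiberwise_of_maps_to
    (g := fun ψ : AddChar G ℂ => addOrderOf ψ) (t := m.divisors)
    (fun ψ hψ => Nat.mem_divisors.mpr ⟨(Finset.mem_filter.mp hψ).2, hm⟩)
    (fun ψ => ψ (-x))]
  apply Finset.sum_congr rfl
  intro d hd
  congr 1
  rw [Finset.filter_filter]
  apply Finset.filter_congr
  intro ψ _
  constructor
  · rintro ⟨-, h2⟩; exact h2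
  · intro h2; exact ⟨h2 ▸ (Nat.mem_divisors.mp hd).1, h2⟩

lemma Tsum_eq {x y : G} (h : eMax G x = eMax G y) :
    ∀ d : ℕ, d ∣ AddMonoid.exponent G → Tsum d x = Tsum (G := G) d y := by
  intro d
  induction d using Nat.strong_induction_on with
  | _ d ih =>
    intro hdN
    have hexp : 0 < AddMonoid.exponent G := exponent_pos'
    have hdpos : 0 < d := Nat.pos_of_dvd_of_pos hdN hexp
    have hS : (∑ ψ ∈ Finset.univ.filter (fun ψ : AddChar G ℂ => d • ψ = 0), ψ (-x))
        = ∑ ψ ∈ Finset.univ.filter (fun ψ : AddChar G ℂ => d • ψ = 0), ψ (-y) := by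
      by_cases hx : ∃ g : G, d • g = x
      · have hy : ∃ g : G, d • g = y :=
          (dvd_eMax_iff hdN y).mp (h ▸ (dvd_eMax_iff hdN x).mpr hx)
        rw [S_card_part hx, S_card_part hy]
      · have hy : ¬ ∃ g : G, d • g = y := fun hy =>
          hx ((dvd_eMax_iff hdN x).mp (h ▸ (dvd_eMax_iff hdN y).mpr hy))
        rw [S_zero_part hx, S_zero_part hy]
    rw [filter_nsmul_eq_filter_dvd, Ssum_eq_sum_T hdpos.ne' x,
      Ssum_eq_sum_T hdpos.ne' y] at hS
    have hd_mem : d ∈ d.divisors := Nat.mem_divisors_self d hdpos.ne'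
    rw [← Finset.sum_erase_add _ _ hd_mem, ← Finset.sum_erase_add _ _ hd_mem] at hS
    have herase : ∑ e ∈ d.divisors.erase d, Tsum e x
        = ∑ e ∈ d.divisors.erase d, Tsum (G := G) e y := by
      apply Finset.sum_congr rfl
      intro e he
      obtain ⟨hne, hmem⟩ := Finset.mem_erase.mp he
      obtain ⟨hed, -⟩ := Nat.mem_divisors.mp hmem
      exact ih e (lt_of_le_of_ne (Nat.le_of_dvd hdpos hed) hne) (hed.trans hdN)
    rw [herase] at hS
    exact add_left_cancel hS

lemma charSum_eq {x y : G} (h : eMax G x = eMax G y) (f : AddChar G ℂ → ℂ)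
    (hf : ∀ ψ χ : AddChar G ℂ, addOrderOf ψ = addOrderOf χ → f ψ = f χ) :
    ∑ ψ : AddChar G ℂ, ψ (-x) * f ψ = ∑ ψ : AddChar G ℂ, ψ (-y) * f ψ := by
  have hmaps : ∀ ψ : AddChar G ℂ, ψ ∈ Finset.univ →
      addOrderOf ψ ∈ (AddMonoid.exponent G).divisors :=
    fun ψ _ => Nat.mem_divisors.mpr ⟨char_order_dvd_exponent ψ, exponent_pos'.ne'⟩
  rw [← Finset.sum_fiberwise_of_maps_to hmaps (fun ψ => ψ (-x) * f ψ),
      ← Finset.sum_fiberwise_of_maps_to hmaps (fun ψ => ψ (-y) * f ψ)]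
  apply Finset.sum_congr rfl
  intro d hd
  by_cases hne : (Finset.univ.filter (fun ψ : AddChar G ℂ => addOrderOf ψ = d)).Nonempty
  · obtain ⟨ψd, hψd⟩ := hne
    have hfconst : ∀ ψ ∈ Finset.univ.filter (fun ψ : AddChar G ℂ => addOrderOf ψ = d),
        f ψ = f ψd := fun ψ hψ =>
      hf ψ ψd (by rw [(Finset.mem_filter.mp hψ).2, (Finset.mem_filter.mp hψd).2])
    have hx' : ∑ ψ ∈ Finset.univ.filter (fun ψ : AddChar G ℂ => addOrderOf ψ = d),
        ψ (-x) * f ψ = Tsum d x * f ψd := by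
      rw [Tsum, Finset.sum_mul]
      exact Finset.sum_congr rfl (fun ψ hψ => by rw [hfconst ψ hψ])
    have hy' : ∑ ψ ∈ Finset.univ.filter (fun ψ : AddChar G ℂ => addOrderOf ψ = d),
        ψ (-y) * f ψ = Tsum d y * f ψd := by
      rw [Tsum, Finset.sum_mul]
      exact Finset.sum_congr rfl (fun ψ hψ => by rw [hfconst ψ hψ])
    rw [hx', hy', Tsum_eq h d (Nat.mem_divisors.mp hd).1]
  · rw [Finset.not_nonempty_iff_eq_empty.mp hne]
    simp

lemma char_map_sum (ψ : AddChar G ℂ) (T : Finset G) :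
    ψ (∑ g ∈ T, g) = ∏ g ∈ T, ψ g := by
  induction T using Finset.cons_induction with
  | empty => simp
  | cons a s ha ih => rw [Finset.sum_cons, AddChar.map_add_eq_mul, ih, Finset.prod_cons]

lemma count_eq (S : Finset G) (k : ℕ)
    (hS : ∀ ψ χ : AddChar G ℂ, addOrderOf ψ = addOrderOf χ →
      Multiset.map ψ S.val = Multiset.map χ S.val)
    {x y : G} (h : eMax G x = eMax G y) :
    ((S.powersetCard k).filter (fun T => T.sum id = x)).card
      = ((S.powersetCard k).filter (fun T => T.sum id = y)).card := by
  have hn : (Fintype.card G : ℂ) ≠ 0 := Nat.cast_ne_zero.mpr Fintype.card_ne_zero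
  have hcard : ∀ z : G,
      (Fintype.card G : ℂ) * ((S.powersetCard k).filter (fun T => T.sum id = z)).card
        = ∑ ψ : AddChar G ℂ, ψ (-z) * (Multiset.map ψ S.val).esymm k := by
    intro z
    have swap : ∑ T ∈ S.powersetCard k, ∑ ψ : AddChar G ℂ, ψ (T.sum id + -z)
        = ∑ ψ : AddChar G ℂ, ψ (-z) * (Multiset.map ψ S.val).esymm k := by
      rw [Finset.sum_comm]
      apply Finset.sum_congr rfl
      intro ψ _
      rw [Finset.esymm_map_val, Finset.mul_sum]
      apply Finset.sum_congr rfl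
      intro T _
      rw [AddChar.map_add_eq_mul, mul_comm]
      congr 1
      have : T.sum id = ∑ g ∈ T, g := rfl
      rw [this, char_map_sum]
    have eval : ∑ T ∈ S.powersetCard k, ∑ ψ : AddChar G ℂ, ψ (T.sum id + -z)
        = (Fintype.card G : ℂ)
            * ((S.powersetCard k).filter (fun T => T.sum id = z)).card := by
      rw [Finset.sum_congr rfl (fun T _ => AddChar.sum_apply_eq_ite (T.sum id + -z))]
      rw [Finset.sum_congr rfl
        (fun T _ => if_congr (add_neg_eq_zero (a := T.sum id) (b := z)) rfl rfl)]
      rw [← Finset.sum_filter, Finset.sum_const, nsmul_eq_mul, mul_comm]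
    rw [← swap, eval]
  have h1 := hcard x
  have h2 := hcard y
  rw [charSum_eq h (fun ψ => (Multiset.map ψ S.val).esymm k)
    (fun ψ χ hoc => congrArg (fun s => Multiset.esymm s k) (hS ψ χ hoc))] at h1
  have h3 := h1.trans h2.symm
  exact_mod_cast mul_left_cancel₀ hn h3

end Aux

theorem stmt16 (G : Type) [AddCommGroup G] [Fintype G] [DecidableEq G]
    (x y : G) (h : eMax G x = eMax G y) (k : ℕ) :
    (sumBlocks G k x).card = (sumBlocks G k y).card ∧
      (sumBlocksStar G k x).card = (sumBlocksStar G k y).card := by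
  constructor
  · have e1 : ∀ z : G, sumBlocks G k z
        = (Finset.univ.powersetCard k).filter (fun T => T.sum id = z) := by
      intro z
      ext T
      simp only [sumBlocks, Finset.mem_filter, Finset.mem_univ, true_and,
        Finset.mem_powersetCard_univ]
      try tauto
    rw [e1 x, e1 y]
    exact count_eq _ k (fun ψ χ hoc => map_univ_char_eq hoc) h
  · have e2 : ∀ z : G, sumBlocksStar G k z
        = ((Finset.univ.erase 0).powersetCard k).filter (fun T => T.sum id = z) := by
      intro z
      ext T
      simp only [sumBlocksStar, Finset.mem_filter, Finset.mem_univ, true_and,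
        Finset.mem_powersetCard, Finset.subset_erase, Finset.subset_univ]
      tauto
    rw [e2 x, e2 y]
    apply count_eq _ k ?_ h
    intro ψ χ hoc
    have key : ∀ ψ' : AddChar G ℂ, Multiset.map ψ' Finset.univ.val
        = (1 : ℂ) ::ₘ Multiset.map ψ' ((Finset.univ.erase (0 : G)).val) := by
      intro ψ'
      rw [Finset.erase_val, ← AddChar.map_zero_eq_one (ψ := ψ'), ← Multiset.map_cons,
        Multiset.cons_erase (Finset.mem_def.mp (Finset.mem_univ (0 : G)))]
    have hu := map_univ_char_eq hoc
    rw [key ψ, key χ] at hu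
    exact (Multiset.cons_inj_right (1 : ℂ)).mp hu
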